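/- Fix θ ∈ [0,1]. For every continuously differentiable h = (h¹, h²) : [0,1] → ℝ² with h(0) = (0,0) and h¹(1) + θ ∫₀¹ h²(t) (h²)′(t) dt = 1, one has (1/2)∫₀¹ ((h¹)′(t)² + (h²)′(t)²) dt ≥ 1/2, with equality for h₀(t) = (t, 0). Moreover, if θ ∈ [0,1), then h₀ is the unique such path achieving equality. -/

import Mathlib

open MeasureTheory

section helpers

lemma elliptic_ftc (h : ℝ → ℝ) (hc : ContDiffOn ℝ 1 h (Set.Icc 0 1)) {t : ℝ}
    (ht : t ∈ Set.Icc (0:ℝ) 1) :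
    ∫ x in (0:ℝ)..t, derivWithin h (Set.Icc 0 1) x = h t - h 0 := by
  apply intervalIntegral.integral_eq_sub_of_hasDeriv_right_of_le ht.1
  · exact hc.continuousOn.mono (Set.Icc_subset_Icc le_rfl ht.2)
  · intro x hx
    have hx' : x ∈ Set.Icc (0:ℝ) 1 := ⟨le_of_lt hx.1, le_trans (le_of_lt hx.2) ht.2⟩
    exact ((hc.differentiableOn one_ne_zero) x hx').hasDerivWithinAt.mono_of_mem_nhdsWithin
      (Icc_mem_nhdsGT_of_mem ⟨hx'.1, lt_of_lt_of_le hx.2 ht.2⟩)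
  · exact ((hc.continuousOn_derivWithin (uniqueDiffOn_Icc one_pos) le_rfl).mono
      (Set.Icc_subset_Icc le_rfl ht.2)).intervalIntegrable_of_Icc ht.1

lemma elliptic_ftc2 (h : ℝ → ℝ) (hc : ContDiffOn ℝ 1 h (Set.Icc 0 1)) (h0 : h 0 = 0) :
    ∫ x in (0:ℝ)..1, h x * derivWithin h (Set.Icc 0 1) x = h 1 ^ 2 / 2 := by
  have key : ∫ x in (0:ℝ)..1, h x * derivWithin h (Set.Icc 0 1) x
      = h 1 ^ 2 / 2 - h 0 ^ 2 / 2 := by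
    apply intervalIntegral.integral_eq_sub_of_hasDeriv_right_of_le
      (f := fun t => h t ^ 2 / 2) zero_le_one
    · exact (hc.continuousOn.pow 2).div_const 2
    · intro x hx
      have hx' : x ∈ Set.Icc (0:ℝ) 1 := ⟨le_of_lt hx.1, le_of_lt hx.2⟩
      have hd := ((hc.differentiableOn one_ne_zero) x hx').hasDerivWithinAt.mono_of_mem_nhdsWithin
        (Icc_mem_nhdsGT_of_mem ⟨hx'.1, hx.2⟩)
      have h2 : HasDerivAt (fun y : ℝ => y ^ 2 / 2) (h x) (h x) := by
        have := (hasDerivAt_pow 2 (h x)).div_const 2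
        simpa using this
      have := h2.comp_hasDerivWithinAt x hd
      simpa [mul_comm, Function.comp_def] using this
    · apply ContinuousOn.intervalIntegrable_of_Icc zero_le_one
      exact hc.continuousOn.mul (hc.continuousOn_derivWithin (uniqueDiffOn_Icc one_pos) le_rfl)
  rw [key, h0]; ring

lemma elliptic_eqzero (f : ℝ → ℝ) (hf : ContinuousOn f (Set.Icc 0 1))
    (hnn : ∀ x ∈ Set.Icc (0:ℝ) 1, 0 ≤ f x)
    (hint : ∫ x in (0:ℝ)..1, f x = 0) : ∀ x ∈ Set.Icc (0:ℝ) 1, f x = 0 := by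
  intro x hx
  by_contra hne
  have hx1 := hx.1; have hx2 := hx.2
  have hpos : 0 < f x := lt_of_le_of_ne (hnn x hx) (Ne.symm hne)
  obtain ⟨ε, hε, hball⟩ := Metric.continuousWithinAt_iff.mp (hf x hx) (f x / 2) (by linarith)
  set c := max 0 (x - ε/2) with hc
  set d := min 1 (x + ε/2) with hd
  have hcd : c < d := by
    refine max_lt (lt_min ?_ ?_) (lt_min ?_ ?_) <;> linarith
  have hc0 : (0:ℝ) ≤ c := le_max_left _ _
  have hd1 : d ≤ 1 := min_le_left _ _
  have hsub : Set.Icc c d ⊆ Set.Icc 0 1 := Set.Icc_subset_Icc hc0 hd1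
  have hlow : ∀ y ∈ Set.Icc c d, f x / 2 ≤ f y := by
    intro y hy
    have hc' : x - ε/2 ≤ y := le_trans (le_max_right _ _) hy.1
    have hd' : y ≤ x + ε/2 := le_trans hy.2 (min_le_right _ _)
    have hdist : dist y x < ε := by
      rw [Real.dist_eq, abs_lt]; constructor <;> linarith
    have := hball (hsub hy) hdist
    rw [Real.dist_eq, abs_lt] at this
    linarith [this.1]
  have hI : ∀ a b : ℝ, 0 ≤ a → a ≤ b → b ≤ 1 → IntervalIntegrable f volume a b := by
    intro a b ha hab hb
    exact (hf.mono (Set.Icc_subset_Icc ha hb)).intervalIntegrable_of_Icc hab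
  have e1 : (∫ y in (0:ℝ)..c, f y) + ∫ y in c..1, f y = ∫ y in (0:ℝ)..1, f y :=
    intervalIntegral.integral_add_adjacent_intervals
      (hI 0 c le_rfl hc0 (hcd.le.trans hd1)) (hI c 1 hc0 (hcd.le.trans hd1) le_rfl)
  have e2 : (∫ y in c..d, f y) + ∫ y in d..1, f y = ∫ y in c..1, f y :=
    intervalIntegral.integral_add_adjacent_intervals (hI c d hc0 hcd.le hd1)
      (hI d 1 (hc0.trans hcd.le) hd1 le_rfl)
  have n1 : 0 ≤ ∫ y in (0:ℝ)..c, f y :=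
    intervalIntegral.integral_nonneg hc0 (fun u hu => hnn u ⟨hu.1, hu.2.trans (hcd.le.trans hd1)⟩)
  have n3 : 0 ≤ ∫ y in d..1, f y :=
    intervalIntegral.integral_nonneg hd1 (fun u hu => hnn u ⟨(hc0.trans hcd.le).trans hu.1, hu.2⟩)
  have nmid : (d - c) * f x / 2 ≤ ∫ y in c..d, f y := by
    have := intervalIntegral.integral_mono_on hcd.le intervalIntegrable_const
      (hI c d hc0 hcd.le hd1) hlow
    simpa using this
  have : 0 < ∫ y in (0:ℝ)..1, f y := by
    have hdc : 0 < d - c := by linarith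
    have : 0 < (d - c) * f x / 2 := by positivity
    nlinarith
  rw [hint] at this
  exact lt_irrefl 0 this

lemma elliptic_sqexp (f : ℝ → ℝ) (hf : ContinuousOn f (Set.Icc 0 1)) (c : ℝ) :
    ∫ x in (0:ℝ)..1, (f x - c) ^ 2
      = (∫ x in (0:ℝ)..1, f x ^ 2) - 2 * c * (∫ x in (0:ℝ)..1, f x) + c ^ 2 := by
  have hIf : IntervalIntegrable f volume 0 1 := hf.intervalIntegrable_of_Icc zero_le_one
  have hIf2 : IntervalIntegrable (fun x => f x ^ 2) volume 0 1 :=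
    (hf.pow 2).intervalIntegrable_of_Icc zero_le_one
  have hrw : ∀ x : ℝ, (f x - c) ^ 2 = f x ^ 2 - (2 * c) * f x + c ^ 2 := fun x => by ring
  simp_rw [hrw]
  rw [intervalIntegral.integral_add (hIf2.sub (hIf.const_mul _)) intervalIntegrable_const,
    intervalIntegral.integral_sub hIf2 (hIf.const_mul _),
    intervalIntegral.integral_const_mul, intervalIntegral.integral_const]
  simp

end helpers

/-- Minimizer in the flat elliptic example: for `θ ∈ [0,1]`, among C¹ paths
`h = (h¹,h²)` on `[0,1]` starting at the origin with `h¹(1) + θ∫₀¹ h² dh² = 1`, the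
energy is at least `1/2`, with equality for `h₀(t) = (t,0)`; for `θ < 1` the
minimizer is unique. -/
theorem stmt_9 (θ : ℝ) (hθ : θ ∈ Set.Icc (0:ℝ) 1) :
    (∀ h1 h2 : ℝ → ℝ,
      ContDiffOn ℝ 1 h1 (Set.Icc 0 1) → ContDiffOn ℝ 1 h2 (Set.Icc 0 1) →
      h1 0 = 0 → h2 0 = 0 →
      h1 1 + θ * (∫ t in (0:ℝ)..1, h2 t * derivWithin h2 (Set.Icc 0 1) t) = 1 →
      (1/2 : ℝ) ≤ (1/2) * ∫ t in (0:ℝ)..1,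
        ((derivWithin h1 (Set.Icc 0 1) t) ^ 2 + (derivWithin h2 (Set.Icc 0 1) t) ^ 2)) ∧
    ((fun t : ℝ => t) 0 = 0 ∧ (fun _ : ℝ => (0:ℝ)) 0 = 0 ∧
      (fun t : ℝ => t) 1 + θ * (∫ t in (0:ℝ)..1,
        (fun _ : ℝ => (0:ℝ)) t * derivWithin (fun _ : ℝ => (0:ℝ)) (Set.Icc 0 1) t) = 1 ∧
      (1/2) * (∫ t in (0:ℝ)..1,
        ((derivWithin (fun t : ℝ => t) (Set.Icc 0 1) t) ^ 2
          + (derivWithin (fun _ : ℝ => (0:ℝ)) (Set.Icc 0 1) t) ^ 2)) = 1/2) ∧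
    (θ < 1 → ∀ h1 h2 : ℝ → ℝ,
      ContDiffOn ℝ 1 h1 (Set.Icc 0 1) → ContDiffOn ℝ 1 h2 (Set.Icc 0 1) →
      h1 0 = 0 → h2 0 = 0 →
      h1 1 + θ * (∫ t in (0:ℝ)..1, h2 t * derivWithin h2 (Set.Icc 0 1) t) = 1 →
      (1/2) * (∫ t in (0:ℝ)..1,
        ((derivWithin h1 (Set.Icc 0 1) t) ^ 2 + (derivWithin h2 (Set.Icc 0 1) t) ^ 2)) = 1/2 →
      ∀ t ∈ Set.Icc (0:ℝ) 1, h1 t = t ∧ h2 t = 0) := by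
  obtain ⟨hθ0, hθ1⟩ := hθ
  have uD := uniqueDiffOn_Icc (zero_lt_one : (0:ℝ) < 1)
  have one_mem : (1:ℝ) ∈ Set.Icc (0:ℝ) 1 := ⟨zero_le_one, le_rfl⟩
  -- common facts extractor
  have core : ∀ h1 h2 : ℝ → ℝ,
      ContDiffOn ℝ 1 h1 (Set.Icc 0 1) → ContDiffOn ℝ 1 h2 (Set.Icc 0 1) →
      h1 0 = 0 → h2 0 = 0 →
      h1 1 + θ * (∫ t in (0:ℝ)..1, h2 t * derivWithin h2 (Set.Icc 0 1) t) = 1 →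
      (∫ t in (0:ℝ)..1,
          ((derivWithin h1 (Set.Icc 0 1) t) ^ 2 + (derivWithin h2 (Set.Icc 0 1) t) ^ 2))
        = (∫ t in (0:ℝ)..1, (derivWithin h1 (Set.Icc 0 1) t) ^ 2)
          + (∫ t in (0:ℝ)..1, (derivWithin h2 (Set.Icc 0 1) t) ^ 2)
      ∧ h1 1 + θ * ((h2 1) ^ 2 / 2) = 1
      ∧ (h1 1) ^ 2 ≤ ∫ t in (0:ℝ)..1, (derivWithin h1 (Set.Icc 0 1) t) ^ 2
      ∧ (h2 1) ^ 2 ≤ ∫ t in (0:ℝ)..1, (derivWithin h2 (Set.Icc 0 1) t) ^ 2 := by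
    intro h1 h2 hc1 hc2 h10 h20 hcon
    have hD1c : ContinuousOn (derivWithin h1 (Set.Icc 0 1)) (Set.Icc 0 1) :=
      hc1.continuousOn_derivWithin uD le_rfl
    have hD2c : ContinuousOn (derivWithin h2 (Set.Icc 0 1)) (Set.Icc 0 1) :=
      hc2.continuousOn_derivWithin uD le_rfl
    have hA : ∫ t in (0:ℝ)..1, derivWithin h1 (Set.Icc 0 1) t = h1 1 := by
      rw [elliptic_ftc h1 hc1 one_mem, h10, sub_zero]
    have hB : ∫ t in (0:ℝ)..1, derivWithin h2 (Set.Icc 0 1) t = h2 1 := by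
      rw [elliptic_ftc h2 hc2 one_mem, h20, sub_zero]
    refine ⟨?_, ?_, ?_, ?_⟩
    · exact intervalIntegral.integral_add
        ((hD1c.pow 2).intervalIntegrable_of_Icc zero_le_one)
        ((hD2c.pow 2).intervalIntegrable_of_Icc zero_le_one)
    · rw [elliptic_ftc2 h2 hc2 h20] at hcon; exact hcon
    · have h0 : 0 ≤ ∫ t in (0:ℝ)..1, (derivWithin h1 (Set.Icc 0 1) t - h1 1) ^ 2 :=
        intervalIntegral.integral_nonneg zero_le_one (fun u _ => sq_nonneg _)
      rw [elliptic_sqexp _ hD1c (h1 1), hA] at h0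
      linarith
    · have h0 : 0 ≤ ∫ t in (0:ℝ)..1, (derivWithin h2 (Set.Icc 0 1) t - h2 1) ^ 2 :=
        intervalIntegral.integral_nonneg zero_le_one (fun u _ => sq_nonneg _)
      rw [elliptic_sqexp _ hD2c (h2 1), hB] at h0
      linarith
  refine ⟨?_, ⟨rfl, rfl, ?_, ?_⟩, ?_⟩
  · -- part 1: lower bound
    intro h1 h2 hc1 hc2 h10 h20 hcon
    obtain ⟨hsplit, hcon', hP, hQ⟩ := core h1 h2 hc1 hc2 h10 h20 hcon
    rw [hsplit]
    have hAeq : h1 1 = 1 - θ * ((h2 1) ^ 2 / 2) := by linarith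
    have key : 1 ≤ (h1 1) ^ 2 + (h2 1) ^ 2 := by
      rw [hAeq]
      nlinarith [sq_nonneg (θ * (h2 1) ^ 2),
        mul_nonneg (sub_nonneg.mpr hθ1) (sq_nonneg (h2 1))]
    linarith
  · -- part 2: constraint for h₀
    simp
  · -- part 2: energy of h₀
    have heq : Set.EqOn
        (fun t => (derivWithin (fun t : ℝ => t) (Set.Icc 0 1) t) ^ 2
          + (derivWithin (fun _ : ℝ => (0:ℝ)) (Set.Icc 0 1) t) ^ 2)
        (fun _ => (1:ℝ)) (Set.uIcc 0 1) := by
      intro x hx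
      rw [Set.uIcc_of_le zero_le_one] at hx
      have hu := uD x hx
      simp only [derivWithin_fun_const]
      rw [show (fun t : ℝ => t) = id from rfl, derivWithin_id _ _ hu]
      norm_num
    rw [intervalIntegral.integral_congr heq]
    simp
  · -- part 3: uniqueness
    intro hθlt h1 h2 hc1 hc2 h10 h20 hcon hE
    obtain ⟨hsplit, hcon', hP, hQ⟩ := core h1 h2 hc1 hc2 h10 h20 hcon
    rw [hsplit] at hE
    have hD1c : ContinuousOn (derivWithin h1 (Set.Icc 0 1)) (Set.Icc 0 1) :=
      hc1.continuousOn_derivWithin uD le_rfl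
    have hD2c : ContinuousOn (derivWithin h2 (Set.Icc 0 1)) (Set.Icc 0 1) :=
      hc2.continuousOn_derivWithin uD le_rfl
    have hQ0 : 0 ≤ ∫ t in (0:ℝ)..1, (derivWithin h2 (Set.Icc 0 1) t) ^ 2 :=
      intervalIntegral.integral_nonneg zero_le_one (fun u _ => sq_nonneg _)
    -- b = 0
    have hAeq : h1 1 = 1 - θ * ((h2 1) ^ 2 / 2) := by linarith
    have hkey : (1 - θ) * (h2 1) ^ 2 + (θ * (h2 1) ^ 2 / 2) ^ 2 ≤ 0 := by nlinarith
    have hb : h2 1 = 0 := by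
      by_contra hb
      have hbpos : 0 < (h2 1) ^ 2 := by positivity
      have h1pos : 0 < (1 - θ) * (h2 1) ^ 2 := mul_pos (by linarith) hbpos
      nlinarith [sq_nonneg (θ * (h2 1) ^ 2 / 2)]
    rw [hb] at hcon' hQ
    have hA1 : h1 1 = 1 := by linarith [hcon']
    have hPval : (∫ t in (0:ℝ)..1, (derivWithin h1 (Set.Icc 0 1) t) ^ 2) = 1 := by
      rw [hA1] at hP; norm_num at hP; linarith
    have hQval : (∫ t in (0:ℝ)..1, (derivWithin h2 (Set.Icc 0 1) t) ^ 2) = 0 := by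
      linarith
    have hA : ∫ t in (0:ℝ)..1, derivWithin h1 (Set.Icc 0 1) t = 1 := by
      rw [elliptic_ftc h1 hc1 one_mem, h10, sub_zero, hA1]
    -- D1 ≡ 1
    have hD1sq : ∫ t in (0:ℝ)..1, (derivWithin h1 (Set.Icc 0 1) t - 1) ^ 2 = 0 := by
      rw [elliptic_sqexp _ hD1c 1, hA, hPval]; ring
    have hD1 : ∀ x ∈ Set.Icc (0:ℝ) 1, derivWithin h1 (Set.Icc 0 1) x = 1 := by
      intro x hx
      have := elliptic_eqzero (fun t => (derivWithin h1 (Set.Icc 0 1) t - 1) ^ 2)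
        ((hD1c.sub continuousOn_const).pow 2) (fun u _ => sq_nonneg _) hD1sq x hx
      have h' : derivWithin h1 (Set.Icc 0 1) x - 1 = 0 := by
        exact pow_eq_zero_iff (two_ne_zero) |>.mp this
      linarith
    have hD2 : ∀ x ∈ Set.Icc (0:ℝ) 1, derivWithin h2 (Set.Icc 0 1) x = 0 := by
      intro x hx
      have := elliptic_eqzero (fun t => (derivWithin h2 (Set.Icc 0 1) t) ^ 2)
        (hD2c.pow 2) (fun u _ => sq_nonneg _) hQval x hx
      exact pow_eq_zero_iff (two_ne_zero) |>.mp this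
    intro t ht
    have hsub : Set.Icc (0:ℝ) t ⊆ Set.Icc 0 1 := Set.Icc_subset_Icc le_rfl ht.2
    constructor
    · have := elliptic_ftc h1 hc1 ht
      rw [h10, sub_zero] at this
      rw [← this]
      rw [intervalIntegral.integral_congr (g := fun _ => (1:ℝ))
        (fun x hx => hD1 x (hsub ((Set.uIcc_of_le ht.1) ▸ hx)))]
      simp
    · have := elliptic_ftc h2 hc2 ht
      rw [h20, sub_zero] at this
      rw [← this]
      rw [intervalIntegral.integral_congr (g := fun _ => (0:ℝ))
        (fun x hx => hD2 x (hsub ((Set.uIcc_of_le ht.1) ▸ hx)))]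
      simp
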